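/- Let R be the transition relation of the four-layer NFA A(G) built from a simple graph G on n vertices. Every walk in A(G) from the start state q_0^1 to the accept state q_{n−1}^4 has length at least 3 and at most n + 2 + (n − 1) − 0; more precisely, the length of any such walk equals i + 3 + (n − 1 − l) where i is the index where the walk leaves layer 1 and l is the index where it enters layer 4, and such a walk of length exactly n+2 exists iff some i satisfies i = l with edges (i,j), (j,k), (k,i) in G for some j, k. -/
import Mathlib


/-- The one-step transition relation of an NFA: `R p q` iff some letter takes `p` to `q`. -/
def NFA.rel {α σ : Type*} (A : NFA α σ) (p q : σ) : Prop := ∃ a, q ∈ A.step p a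

/-- There is a walk of exactly `m` steps of the relation `R` from `s` to `t`. -/
def RelPath {σ : Type*} (R : σ → σ → Prop) (m : ℕ) (s t : σ) : Prop :=
  ∃ p : ℕ → σ, p 0 = s ∧ p m = t ∧ ∀ i < m, R (p i) (p (i + 1))

/-- An NFA is acyclic if its transition diagram contains no nonempty cycle. -/
def NFA.Acyclic {α σ : Type*} (A : NFA α σ) : Prop :=
  ¬ ∃ (q : σ) (m : ℕ), 0 < m ∧ RelPath A.rel m q q

/-- The four-layer unary NFA built from a simple graph `G` on `Fin n` for the triangle
reduction.  States are `(i, j)` with `i : Fin n` a vertex and `j : Fin 4` a layer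
(layers 1–4 of the paper are `0,1,2,3` here).  Layer 0 and layer 3 are chains
`(i,·) → (i+1,·)`, and `(i, j) → (k, j+1)` is a transition iff `G.Adj i k`.
The start state is `(0, 0)` and the unique accept state is `(n-1, 3)`. -/
def triangleNFA (n : ℕ) [NeZero n] (G : SimpleGraph (Fin n)) :
    NFA Unit (Fin n × Fin 4) where
  step p _ :=
    {q | ((p.2 = 0 ∨ p.2 = 3) ∧ q.2 = p.2 ∧ (q.1 : ℕ) = (p.1 : ℕ) + 1) ∨
         ((q.2 : ℕ) = (p.2 : ℕ) + 1 ∧ G.Adj p.1 q.1)}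
  start := {(0, 0)}
  accept := {q | (q.1 : ℕ) = n - 1 ∧ q.2 = 3}

/-- Every walk from the start state to the accept state of the four-layer NFA has
length r = i + 3 + (n - 1 - l) for some i, l (so 3 ≤ r ≤ 2n + 1), and a walk of
length exactly n + 2 exists iff G has vertices i, j, k with edges (i,j), (j,k), (k,i). -/
lemma triangle_step_cases {n : ℕ} [NeZero n] {G : SimpleGraph (Fin n)}
    {r : ℕ} {p : ℕ → Fin n × Fin 4}
    (hstep : ∀ t < r, (triangleNFA n G).rel (p t) (p (t + 1))) {t : ℕ} (ht : t < r) :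
    ((((p t).2 : ℕ) = 0 ∨ ((p t).2 : ℕ) = 3) ∧ ((p (t+1)).2 : ℕ) = ((p t).2 : ℕ) ∧
      ((p (t+1)).1 : ℕ) = ((p t).1 : ℕ) + 1) ∨
    (((p (t+1)).2 : ℕ) = ((p t).2 : ℕ) + 1 ∧ G.Adj (p t).1 (p (t+1)).1) := by
  obtain ⟨a, h⟩ := hstep t ht
  rcases h with ⟨h03, heq, hidx⟩ | h
  · refine Or.inl ⟨?_, by rw [heq], hidx⟩
    rcases h03 with h | h
    · exact Or.inl (by rw [h]; rfl)
    · exact Or.inr (by rw [h]; rfl)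
  · exact Or.inr h

lemma walk_structure {n : ℕ} [NeZero n] {G : SimpleGraph (Fin n)}
    {r : ℕ} {p : ℕ → Fin n × Fin 4}
    (h0 : p 0 ∈ (triangleNFA n G).start)
    (ha : p r ∈ (triangleNFA n G).accept)
    (hstep : ∀ t < r, (triangleNFA n G).rel (p t) (p (t + 1))) :
    ∃ t0 : ℕ, t0 + 3 ≤ r ∧ ((p t0).1 : ℕ) = t0 ∧
      r = t0 + 3 + (n - 1 - ((p (t0+3)).1 : ℕ)) ∧
      G.Adj (p t0).1 (p (t0+1)).1 ∧ G.Adj (p (t0+1)).1 (p (t0+2)).1 ∧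
      G.Adj (p (t0+2)).1 (p (t0+3)).1 := by
  classical
  have h0' : p 0 = (0, 0) := h0
  have ha1 : ((p r).1 : ℕ) = n - 1 := ha.1
  have ha2 : ((p r).2 : ℕ) = 3 := by rw [ha.2]; rfl
  have hex : ∃ t, t ≤ r ∧ ((p t).2 : ℕ) ≠ 0 := ⟨r, le_refl _, by omega⟩
  set T := Nat.find hex with hTdef
  have hTr : T ≤ r := (Nat.find_spec hex).1
  have hTne : ((p T).2 : ℕ) ≠ 0 := (Nat.find_spec hex).2
  have hmin : ∀ t < T, ((p t).2 : ℕ) = 0 := by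
    intro t ht
    by_contra hne
    exact Nat.find_min hex ht ⟨le_trans (le_of_lt ht) hTr, hne⟩
  have hT1 : 1 ≤ T := by
    rcases Nat.eq_zero_or_pos T with h | h
    · exfalso; apply hTne; rw [h, h0']; rfl
    · exact h
  have hpre : ∀ t, t < T → ((p t).1 : ℕ) = t := by
    intro t
    induction t with
    | zero => intro _; rw [h0']; rfl
    | succ t ih =>
      intro ht
      have ht' : t < T := Nat.lt_of_succ_lt ht
      have htr : t < r := lt_of_lt_of_le ht' hTr
      rcases triangle_step_cases hstep htr with ⟨_, _, hidx⟩ | ⟨hl, _⟩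
      · rw [hidx, ih ht']
      · have h1 : ((p (t+1)).2 : ℕ) = 0 := hmin _ ht
        rw [hmin _ ht'] at hl
        omega
  set t0 := T - 1 with ht0def
  have hTt0 : T = t0 + 1 := by omega
  have hl0 : ((p t0).2 : ℕ) = 0 := hmin _ (by omega)
  have hi0 : ((p t0).1 : ℕ) = t0 := hpre _ (by omega)
  have ht0r : t0 < r := by omega
  rw [hTt0] at hTne
  -- step at t0 : cross to layer 1
  obtain ⟨hl1, hadj1⟩ : ((p (t0+1)).2 : ℕ) = 1 ∧ G.Adj (p t0).1 (p (t0+1)).1 := by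
    rcases triangle_step_cases hstep ht0r with ⟨_, heq, _⟩ | ⟨hl, hadj⟩
    · omega
    · exact ⟨by omega, hadj⟩
  have ht1r : t0 + 1 < r := by
    by_contra h
    have : t0 + 1 = r := by omega
    rw [this] at hl1; omega
  have e2 : t0 + 1 + 1 = t0 + 2 := rfl
  obtain ⟨hl2, hadj2⟩ : ((p (t0+2)).2 : ℕ) = 2 ∧ G.Adj (p (t0+1)).1 (p (t0+2)).1 := by
    have h := triangle_step_cases hstep ht1r
    rw [e2] at h
    rcases h with ⟨h03, _, _⟩ | ⟨hl, hadj⟩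
    · omega
    · exact ⟨by omega, hadj⟩
  have ht2r : t0 + 2 < r := by
    by_contra h
    have : t0 + 2 = r := by omega
    rw [this] at hl2; omega
  have e3 : t0 + 2 + 1 = t0 + 3 := rfl
  obtain ⟨hl3, hadj3⟩ : ((p (t0+3)).2 : ℕ) = 3 ∧ G.Adj (p (t0+2)).1 (p (t0+3)).1 := by
    have h := triangle_step_cases hstep ht2r
    rw [e3] at h
    rcases h with ⟨h03, _, _⟩ | ⟨hl, hadj⟩
    · omega
    · exact ⟨by omega, hadj⟩
  have ht3r : t0 + 3 ≤ r := by omega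
  -- suffix : layer stays 3, index increments
  have hsuf : ∀ d, t0 + 3 + d ≤ r →
      ((p (t0+3+d)).2 : ℕ) = 3 ∧
      ((p (t0+3+d)).1 : ℕ) = ((p (t0+3)).1 : ℕ) + d := by
    intro d
    induction d with
    | zero => intro _; exact ⟨hl3, rfl⟩
    | succ d ih =>
      intro hd
      have hd' : t0 + 3 + d < r := by omega
      obtain ⟨ihl, ihi⟩ := ih (by omega)
      have h := triangle_step_cases hstep hd'
      have e : t0 + 3 + d + 1 = t0 + 3 + (d + 1) := by omega
      rw [e] at h
      rcases h with ⟨_, heq, hidx⟩ | ⟨hl, _⟩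
      · exact ⟨by omega, by omega⟩
      · have h4 := (p (t0 + 3 + (d+1))).2.isLt
        omega
  obtain ⟨_, hidxr⟩ := hsuf (r - (t0 + 3)) (by omega)
  rw [show t0 + 3 + (r - (t0+3)) = r by omega] at hidxr
  have hlub : ((p (t0+3)).1 : ℕ) < n := (p (t0+3)).1.isLt
  exact ⟨t0, ht3r, hi0, by omega, hadj1, hadj2, hadj3⟩

theorem triangleNFA_walk_lengths {n : ℕ} [NeZero n] (G : SimpleGraph (Fin n)) :
    (∀ (r : ℕ) (p : ℕ → Fin n × Fin 4),
        p 0 ∈ (triangleNFA n G).start → p r ∈ (triangleNFA n G).accept →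
        (∀ t < r, (triangleNFA n G).rel (p t) (p (t + 1))) →
        ∃ i l : Fin n,
          r = (i : ℕ) + 3 + (n - 1 - (l : ℕ)) ∧ 3 ≤ r ∧ r ≤ 2 * n + 1) ∧
    ((∃ p : ℕ → Fin n × Fin 4,
        p 0 ∈ (triangleNFA n G).start ∧ p (n + 2) ∈ (triangleNFA n G).accept ∧
        ∀ t < n + 2, (triangleNFA n G).rel (p t) (p (t + 1))) ↔
      ∃ i j k : Fin n, G.Adj i j ∧ G.Adj j k ∧ G.Adj k i) := by
  have hn : 0 < n := Nat.pos_of_ne_zero (NeZero.ne n)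
  constructor
  · intro r p h0 ha hstep
    obtain ⟨t0, h3, hi0, hr, _, _, _⟩ := walk_structure h0 ha hstep
    have h1 := (p t0).1.isLt
    have h2 := (p (t0+3)).1.isLt
    exact ⟨(p t0).1, (p (t0+3)).1, by omega, by omega, by omega⟩
  · constructor
    · rintro ⟨p, h0, ha, hstep⟩
      obtain ⟨t0, h3, hi0, hr, hadj1, hadj2, hadj3⟩ := walk_structure h0 ha hstep
      have h1 := (p t0).1.isLt
      have h2 := (p (t0+3)).1.isLt
      have heq : (p (t0+3)).1 = (p t0).1 := Fin.ext (by omega)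
      exact ⟨(p t0).1, (p (t0+1)).1, (p (t0+2)).1, hadj1, hadj2, heq ▸ hadj3⟩
    · rintro ⟨i, j, k, hij, hjk, hki⟩
      have hi := i.isLt
      refine ⟨fun t =>
        if t ≤ (i : ℕ) then (⟨t % n, Nat.mod_lt _ hn⟩, 0)
        else if t = (i : ℕ) + 1 then (j, 1)
        else if t = (i : ℕ) + 2 then (k, 2)
        else (⟨(t - 3) % n, Nat.mod_lt _ hn⟩, 3), ?_, ?_, ?_⟩
      · show (_ : Fin n × Fin 4) = (0, 0)
        beta_reduce
        rw [if_pos (Nat.zero_le _)]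
        refine Prod.ext ?_ rfl
        exact Fin.ext (by simp)
      · refine ⟨?_, ?_⟩ <;> beta_reduce <;>
          rw [if_neg (show ¬ (n + 2 ≤ (i : ℕ)) by omega),
            if_neg (show ¬ (n + 2 = (i : ℕ) + 1) by omega),
            if_neg (show ¬ (n + 2 = (i : ℕ) + 2) by omega)]
        · show (n + 2 - 3) % n = n - 1
          rw [Nat.mod_eq_of_lt (show n + 2 - 3 < n by omega)]
          omega
      · intro t ht
        rcases Nat.lt_trichotomy t (i : ℕ) with h | h | h
        · -- stay in layer 0
          refine ⟨(), Or.inl ?_⟩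
          beta_reduce
          rw [if_pos (le_of_lt h), if_pos (show t + 1 ≤ (i : ℕ) by omega)]
          refine ⟨Or.inl rfl, rfl, ?_⟩
          show (t + 1) % n = t % n + 1
          rw [Nat.mod_eq_of_lt (show t + 1 < n by omega),
            Nat.mod_eq_of_lt (show t < n by omega)]
        · -- cross i → j
          refine ⟨(), Or.inr ?_⟩
          beta_reduce
          rw [if_pos (le_of_eq h), if_neg (show ¬ (t + 1 ≤ (i : ℕ)) by omega),
            if_pos (show t + 1 = (i : ℕ) + 1 by omega)]
          refine ⟨rfl, ?_⟩
          have e : (⟨t % n, Nat.mod_lt _ hn⟩ : Fin n) = i := Fin.ext (by show t % n = (i : ℕ); rw [Nat.mod_eq_of_lt (show t < n by omega)]; omega)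
          rw [e]
          exact hij
        · rcases Nat.lt_trichotomy t ((i : ℕ) + 2) with h' | h' | h'
          · -- t = i + 1 : cross j → k
            have ht1 : t = (i : ℕ) + 1 := by omega
            refine ⟨(), Or.inr ?_⟩
            beta_reduce
            rw [if_neg (show ¬ (t ≤ (i : ℕ)) by omega), if_pos ht1,
              if_neg (show ¬ (t + 1 ≤ (i : ℕ)) by omega),
              if_neg (show ¬ (t + 1 = (i : ℕ) + 1) by omega),
              if_pos (show t + 1 = (i : ℕ) + 2 by omega)]
            exact ⟨rfl, hjk⟩
          · -- t = i + 2 : cross k → i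
            refine ⟨(), Or.inr ?_⟩
            beta_reduce
            rw [if_neg (show ¬ (t ≤ (i : ℕ)) by omega),
              if_neg (show ¬ (t = (i : ℕ) + 1) by omega), if_pos h',
              if_neg (show ¬ (t + 1 ≤ (i : ℕ)) by omega),
              if_neg (show ¬ (t + 1 = (i : ℕ) + 1) by omega),
              if_neg (show ¬ (t + 1 = (i : ℕ) + 2) by omega)]
            refine ⟨rfl, ?_⟩
            have e : (⟨(t + 1 - 3) % n, Nat.mod_lt _ hn⟩ : Fin n) = i :=
              Fin.ext (by show (t + 1 - 3) % n = (i : ℕ); rw [Nat.mod_eq_of_lt (show t + 1 - 3 < n by omega)]; omega)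
            rw [e]
            exact hki
          · -- stay in layer 3
            refine ⟨(), Or.inl ?_⟩
            beta_reduce
            rw [if_neg (show ¬ (t ≤ (i : ℕ)) by omega),
              if_neg (show ¬ (t = (i : ℕ) + 1) by omega),
              if_neg (show ¬ (t = (i : ℕ) + 2) by omega),
              if_neg (show ¬ (t + 1 ≤ (i : ℕ)) by omega),
              if_neg (show ¬ (t + 1 = (i : ℕ) + 1) by omega),
              if_neg (show ¬ (t + 1 = (i : ℕ) + 2) by omega)]
            refine ⟨Or.inr rfl, rfl, ?_⟩
            show (t + 1 - 3) % n = (t - 3) % n + 1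
            rw [Nat.mod_eq_of_lt (show t + 1 - 3 < n by omega),
              Nat.mod_eq_of_lt (show t - 3 < n by omega)]
            omega
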